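/- Let σ : ℝ → ℝ be smooth with σ(t) ≠ 0 for all t, let g : ℝ → ℝ be smooth, let λ ∈ ℝ, and define C(t) := g'(t)/(2σ(t)). If u : ℝ³ → ℝ is smooth and satisfies ∂x(∂t u + u ∂x u − ∂x² u) + σ(t) ∂y² u = 0 for all (x,y,t), then the function v(x,y,t) := u(x + C(t)(λ y − λ² g(t)/2), y − λ g(t), t) − C'(t)(λ y − λ² g(t)/2) also satisfies this equation for all (x,y,t). (This is the finite form of the symmetry generated by Y(g) = g(t)∂y − (g'(t)/(2σ(t))) y ∂x − (d/dt)(g'(t)/(2σ(t))) y ∂u.) -/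

import Mathlib

/-- Partial derivative in the first (`x`) variable. -/
noncomputable def pdx (u : ℝ → ℝ → ℝ → ℝ) : ℝ → ℝ → ℝ → ℝ :=
  fun x y t => deriv (fun s => u s y t) x

/-- Partial derivative in the second (`y`) variable. -/
noncomputable def pdy (u : ℝ → ℝ → ℝ → ℝ) : ℝ → ℝ → ℝ → ℝ :=
  fun x y t => deriv (fun s => u x s t) y

/-- Partial derivative in the third (`t`) variable. -/
noncomputable def pdt (u : ℝ → ℝ → ℝ → ℝ) : ℝ → ℝ → ℝ → ℝ :=
  fun x y t => deriv (fun s => u x y s) t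

/-- The two-dimensional generalized Burgers equation
`∂x(∂t u + u ∂x u − ∂x² u) + σ(t) ∂y² u = 0`. -/
def IsGB2 (σ : ℝ → ℝ) (u : ℝ → ℝ → ℝ → ℝ) : Prop :=
  ∀ x y t : ℝ,
    pdx (fun x y t => pdt u x y t + u x y t * pdx u x y t - pdx (pdx u) x y t) x y t
      + σ t * pdy (pdy u) x y t = 0

/-- The coefficient `C(t) = g'(t)/(2σ(t))`. -/
noncomputable def Ccoef (σ g : ℝ → ℝ) : ℝ → ℝ :=
  fun t => deriv g t / (2 * σ t)

/-! Auxiliary machinery: directional derivatives on `ℝ × ℝ × ℝ`. -/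

/-- Directional derivative of `U` in direction `e`. -/
noncomputable def Dd (e : ℝ × ℝ × ℝ) (U : ℝ × ℝ × ℝ → ℝ) : ℝ × ℝ × ℝ → ℝ :=
  fun p => fderiv ℝ U p e

lemma Dd_contDiff {U : ℝ × ℝ × ℝ → ℝ} (hU : ContDiff ℝ (⊤ : ℕ∞) U) (e : ℝ × ℝ × ℝ) :
    ContDiff ℝ (⊤ : ℕ∞) (Dd e U) :=
  (hU.fderiv_right (by exact_mod_cast le_top)).clm_apply contDiff_const

lemma deriv_along {U : ℝ × ℝ × ℝ → ℝ} (hU : ContDiff ℝ (⊤ : ℕ∞) U)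
    {c : ℝ → ℝ × ℝ × ℝ} {e : ℝ × ℝ × ℝ} {s : ℝ} (hc : HasDerivAt c e s) :
    HasDerivAt (fun r => U (c r)) (Dd e U (c s)) s :=
  ((hU.differentiable (by simp)).differentiableAt.hasFDerivAt).comp_hasDerivAt s hc

lemma Dd_dir (U : ℝ × ℝ × ℝ → ℝ) (p : ℝ × ℝ × ℝ) (a b c : ℝ) :
    Dd (a, b, c) U p =
      a * Dd (1, 0, 0) U p + b * Dd (0, 1, 0) U p + c * Dd (0, 0, 1) U p := by
  have h : ((a, b, c) : ℝ × ℝ × ℝ)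
      = a • ((1 : ℝ), (0 : ℝ), (0 : ℝ)) + b • ((0 : ℝ), (1 : ℝ), (0 : ℝ))
        + c • ((0 : ℝ), (0 : ℝ), (1 : ℝ)) := by
    simp [Prod.ext_iff]
  simp only [Dd, h, map_add, map_smul, smul_eq_mul]

lemma Dd_symm {U : ℝ × ℝ × ℝ → ℝ} (hU : ContDiff ℝ (⊤ : ℕ∞) U) (e f p : ℝ × ℝ × ℝ) :
    Dd e (Dd f U) p = Dd f (Dd e U) p := by
  have hdU : ∀ q, HasFDerivAt U (fderiv ℝ U q) q := fun q =>
    ((hU.differentiable (by simp)).differentiableAt).hasFDerivAt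
  have hfd : DifferentiableAt ℝ (fderiv ℝ U) p :=
    ((hU.fderiv_right (m := ((⊤:ℕ∞) : WithTop ℕ∞)) (by exact_mod_cast le_top)).differentiable (by simp)).differentiableAt
  have key : ∀ w : ℝ × ℝ × ℝ,
      fderiv ℝ (fun q => fderiv ℝ U q w) p = (fderiv ℝ (fderiv ℝ U) p).flip w := by
    intro w
    have := fderiv_clm_apply (c := fderiv ℝ U) (u := fun _ => w) hfd (differentiableAt_const w)
    simpa using this
  have hsymm := second_derivative_symmetric (f := U) (f' := fderiv ℝ U)
    (f'' := fderiv ℝ (fderiv ℝ U) p) hdU hfd.hasFDerivAt e f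
  show fderiv ℝ (fun q => fderiv ℝ U q f) p e = fderiv ℝ (fun q => fderiv ℝ U q e) p f
  rw [key f, key e]
  simpa using hsymm



lemma Dd_comb {F G H : ℝ × ℝ × ℝ → ℝ} (hF : Differentiable ℝ F) (hG : Differentiable ℝ G)
    (hH : Differentiable ℝ H) (a b c : ℝ) (e p : ℝ × ℝ × ℝ) :
    Dd e (fun q => a * F q + b * G q + c * H q) p
      = a * Dd e F p + b * Dd e G p + c * Dd e H p := by
  have h : HasFDerivAt (fun q => a * F q + b * G q + c * H q)
      (a • fderiv ℝ F p + b • fderiv ℝ G p + c • fderiv ℝ H p) p :=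
    (((hF p).hasFDerivAt.const_mul a).add ((hG p).hasFDerivAt.const_mul b)).add
      ((hH p).hasFDerivAt.const_mul c)
  simp [Dd, h.fderiv, mul_comm]

theorem stmt14 (σ : ℝ → ℝ) (hσ : ContDiff ℝ (⊤ : ℕ∞) σ) (hσ0 : ∀ t, σ t ≠ 0)
    (g : ℝ → ℝ) (hg : ContDiff ℝ (⊤ : ℕ∞) g) (lam : ℝ)
    (u : ℝ → ℝ → ℝ → ℝ)
    (hu : ContDiff ℝ (⊤ : ℕ∞) (fun p : ℝ × ℝ × ℝ => u p.1 p.2.1 p.2.2))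
    (heq : IsGB2 σ u) :
    IsGB2 σ (fun x y t =>
      u (x + Ccoef σ g t * (lam * y - lam ^ 2 * g t / 2)) (y - lam * g t) t
        - deriv (Ccoef σ g) t * (lam * y - lam ^ 2 * g t / 2)) := by
  have htop : ((⊤ : ℕ∞) : WithTop ℕ∞) = (⊤ : ℕ∞) := rfl
  set U : ℝ × ℝ × ℝ → ℝ := fun p => u p.1 p.2.1 p.2.2 with hUdef
  have hU : ContDiff ℝ (⊤ : ℕ∞) U := hu
  set C : ℝ → ℝ := Ccoef σ g with hCdef
  -- smoothness of C and its derivative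
  have hdg : ContDiff ℝ (⊤ : ℕ∞) (deriv g) := (contDiff_infty_iff_deriv.mp hg).2
  have hC : ContDiff ℝ (⊤ : ℕ∞) C :=
    hdg.div (contDiff_const.mul hσ) (fun t => mul_ne_zero two_ne_zero (hσ0 t))
  have hdC : ContDiff ℝ (⊤ : ℕ∞) (deriv C) := (contDiff_infty_iff_deriv.mp hC).2
  have hgd : Differentiable ℝ g := hg.differentiable (by simp)
  have hCd : Differentiable ℝ C := hC.differentiable (by simp)
  have hdCd : Differentiable ℝ (deriv C) := hdC.differentiable (by simp)
  -- directional derivative functions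
  set E1 : ℝ × ℝ × ℝ := (1, 0, 0) with hE1
  set E2 : ℝ × ℝ × ℝ := (0, 1, 0) with hE2
  set E3 : ℝ × ℝ × ℝ := (0, 0, 1) with hE3
  set W1 := Dd E1 U with hW1def
  set W2 := Dd E2 U with hW2def
  set W3 := Dd E3 U with hW3def
  have hW1 : ContDiff ℝ (⊤ : ℕ∞) W1 := Dd_contDiff hU E1
  have hW2 : ContDiff ℝ (⊤ : ℕ∞) W2 := Dd_contDiff hU E2
  have hW3 : ContDiff ℝ (⊤ : ℕ∞) W3 := Dd_contDiff hU E3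
  set W11 := Dd E1 W1 with hW11def
  have hW11 : ContDiff ℝ (⊤ : ℕ∞) W11 := Dd_contDiff hW1 E1
  -- straight coordinate paths
  have hxpath : ∀ (y t x : ℝ), HasDerivAt (fun s : ℝ => ((s, y, t) : ℝ × ℝ × ℝ)) E1 x := by
    intro y t x
    exact (hasDerivAt_id x).prodMk ((hasDerivAt_const x y).prodMk (hasDerivAt_const x t))
  have hypath : ∀ (x t y : ℝ), HasDerivAt (fun s : ℝ => ((x, s, t) : ℝ × ℝ × ℝ)) E2 y := by
    intro x t y
    exact (hasDerivAt_const y x).prodMk ((hasDerivAt_id y).prodMk (hasDerivAt_const y t))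
  have htpath : ∀ (x y t : ℝ), HasDerivAt (fun s : ℝ => ((x, y, s) : ℝ × ℝ × ℝ)) E3 t := by
    intro x y t
    exact (hasDerivAt_const t x).prodMk ((hasDerivAt_const t y).prodMk (hasDerivAt_id t))
  -- partial derivatives of u
  have hpdx_fun : pdx u = fun x y t => W1 (x, y, t) := by
    funext x y t
    exact (deriv_along hU (hxpath y t x)).deriv
  have hpdy_fun : pdy u = fun x y t => W2 (x, y, t) := by
    funext x y t
    exact (deriv_along hU (hypath x t y)).deriv
  have hpdt_fun : pdt u = fun x y t => W3 (x, y, t) := by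
    funext x y t
    exact (deriv_along hU (htpath x y t)).deriv
  have hpdxx_fun : pdx (pdx u) = fun x y t => W11 (x, y, t) := by
    rw [hpdx_fun]
    funext x y t
    exact (deriv_along hW1 (hxpath y t x)).deriv
  have hpdyy_fun : pdy (pdy u) = fun x y t => Dd E2 W2 (x, y, t) := by
    rw [hpdy_fun]
    funext x y t
    exact (deriv_along hW2 (hypath x t y)).deriv
  -- the equation for u, in directional-derivative form
  have heqD : ∀ x y t : ℝ,
      Dd E1 W3 (x, y, t) + W1 (x, y, t) * W1 (x, y, t) + U (x, y, t) * W11 (x, y, t)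
        - Dd E1 W11 (x, y, t) + σ t * Dd E2 W2 (x, y, t) = 0 := by
    intro x y t
    have h := heq x y t
    rw [hpdxx_fun, hpdyy_fun, hpdt_fun, hpdx_fun] at h
    beta_reduce at h
    have hD : HasDerivAt
        (fun s : ℝ => W3 (s, y, t) + u s y t * W1 (s, y, t) - W11 (s, y, t))
        (Dd E1 W3 (x, y, t)
          + (W1 (x, y, t) * W1 (x, y, t) + U (x, y, t) * W11 (x, y, t))
          - Dd E1 W11 (x, y, t)) x :=
      ((deriv_along hW3 (hxpath y t x)).add
        ((deriv_along hU (hxpath y t x)).mul (deriv_along hW1 (hxpath y t x)))).sub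
        (deriv_along hW11 (hxpath y t x))
    have h2 : pdx (fun x y t => W3 (x, y, t) + u x y t * W1 (x, y, t) - W11 (x, y, t)) x y t
        = Dd E1 W3 (x, y, t)
          + (W1 (x, y, t) * W1 (x, y, t) + U (x, y, t) * W11 (x, y, t))
          - Dd E1 W11 (x, y, t) := hD.deriv
    rw [h2] at h
    linarith
  -- the transformed point map
  intro x y t
  -- abbreviation for the new function
  set v : ℝ → ℝ → ℝ → ℝ := fun x y t =>
      u (x + C t * (lam * y - lam ^ 2 * g t / 2)) (y - lam * g t) t
        - deriv C t * (lam * y - lam ^ 2 * g t / 2) with hvdef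
  show pdx (fun x y t => pdt v x y t + v x y t * pdx v x y t - pdx (pdx v) x y t) x y t
      + σ t * pdy (pdy v) x y t = 0
  -- path derivative facts
  have hvx : ∀ x y t : ℝ, HasDerivAt
      (fun s : ℝ => ((s + C t * (lam * y - lam ^ 2 * g t / 2), y - lam * g t, t) : ℝ × ℝ × ℝ))
      E1 x := by
    intro x y t
    exact ((hasDerivAt_id x).add_const _).prodMk
      ((hasDerivAt_const x _).prodMk (hasDerivAt_const x t))
  have hvy : ∀ x y t : ℝ, HasDerivAt
      (fun s : ℝ => ((x + C t * (lam * s - lam ^ 2 * g t / 2), s - lam * g t, t) : ℝ × ℝ × ℝ))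
      (C t * lam, 1, 0) y := by
    intro x y t
    have h1 : HasDerivAt (fun s : ℝ => x + C t * (lam * s - lam ^ 2 * g t / 2)) (C t * lam) y := by
      simpa using ((((hasDerivAt_id y).const_mul lam).sub_const
        (lam ^ 2 * g t / 2)).const_mul (C t)).const_add x
    have h2 : HasDerivAt (fun s : ℝ => s - lam * g t) (1 : ℝ) y := (hasDerivAt_id y).sub_const _
    exact h1.prodMk (h2.prodMk (hasDerivAt_const y t))
  have hvt : ∀ x y t : ℝ, HasDerivAt
      (fun s : ℝ => ((x + C s * (lam * y - lam ^ 2 * g s / 2), y - lam * g s, s) : ℝ × ℝ × ℝ))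
      (deriv C t * (lam * y - lam ^ 2 * g t / 2) + C t * (-(lam ^ 2 * deriv g t / 2)),
        -(lam * deriv g t), 1) t := by
    intro x y t
    have hq1 : HasDerivAt (fun s : ℝ => lam * y - lam ^ 2 * g s / 2)
        (-(lam ^ 2 * deriv g t / 2)) t := by
      simpa using (((hgd t).hasDerivAt.const_mul (lam ^ 2)).div_const 2).const_sub (lam * y)
    have h1 : HasDerivAt (fun s : ℝ => x + C s * (lam * y - lam ^ 2 * g s / 2))
        (deriv C t * (lam * y - lam ^ 2 * g t / 2) + C t * (-(lam ^ 2 * deriv g t / 2))) t :=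
      ((hCd t).hasDerivAt.mul hq1).const_add x
    have h2 : HasDerivAt (fun s : ℝ => y - lam * g s) (-(lam * deriv g t)) t := by
      simpa using ((hgd t).hasDerivAt.const_mul lam).const_sub y
    exact h1.prodMk (h2.prodMk (hasDerivAt_id t))
  -- first partial derivatives of v
  have hv_pdx_fun : pdx v = fun x y t =>
      W1 (x + C t * (lam * y - lam ^ 2 * g t / 2), y - lam * g t, t) := by
    funext x y t
    have h : HasDerivAt (fun s : ℝ => v s y t)
        (W1 (x + C t * (lam * y - lam ^ 2 * g t / 2), y - lam * g t, t)) x :=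
      (deriv_along hU (hvx x y t)).sub_const _
    exact h.deriv
  have hv_pdxx_fun : pdx (pdx v) = fun x y t =>
      W11 (x + C t * (lam * y - lam ^ 2 * g t / 2), y - lam * g t, t) := by
    rw [hv_pdx_fun]
    funext x y t
    exact (deriv_along hW1 (hvx x y t)).deriv
  have hv_pdy_fun : pdy v = fun x y t =>
      Dd (C t * lam, 1, 0) U (x + C t * (lam * y - lam ^ 2 * g t / 2), y - lam * g t, t)
        - deriv C t * lam := by
    funext x y t
    have hlin : HasDerivAt (fun s : ℝ => deriv C t * (lam * s - lam ^ 2 * g t / 2))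
        (deriv C t * lam) y := by
      simpa using (((hasDerivAt_id y).const_mul lam).sub_const
        (lam ^ 2 * g t / 2)).const_mul (deriv C t)
    exact ((deriv_along hU (hvy x y t)).sub hlin).deriv
  have hv_pdt_fun : pdt v = fun x y t =>
      Dd (deriv C t * (lam * y - lam ^ 2 * g t / 2) + C t * (-(lam ^ 2 * deriv g t / 2)),
            -(lam * deriv g t), 1) U
          (x + C t * (lam * y - lam ^ 2 * g t / 2), y - lam * g t, t)
        - (deriv (deriv C) t * (lam * y - lam ^ 2 * g t / 2)
            + deriv C t * (-(lam ^ 2 * deriv g t / 2))) := by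
    funext x y t
    have hq1 : HasDerivAt (fun s : ℝ => lam * y - lam ^ 2 * g s / 2)
        (-(lam ^ 2 * deriv g t / 2)) t := by
      simpa using (((hgd t).hasDerivAt.const_mul (lam ^ 2)).div_const 2).const_sub (lam * y)
    have hlin : HasDerivAt (fun s : ℝ => deriv C s * (lam * y - lam ^ 2 * g s / 2))
        (deriv (deriv C) t * (lam * y - lam ^ 2 * g t / 2)
          + deriv C t * (-(lam ^ 2 * deriv g t / 2))) t :=
      (hdCd t).hasDerivAt.mul hq1
    exact ((deriv_along hU (hvt x y t)).sub hlin).deriv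
  -- differentiability facts
  have hW1d : Differentiable ℝ W1 := hW1.differentiable (by simp)
  have hW2d : Differentiable ℝ W2 := hW2.differentiable (by simp)
  have hW3d : Differentiable ℝ W3 := hW3.differentiable (by simp)
  have hexp : ∀ a b c : ℝ, Dd (a, b, c) U = fun p => a * W1 p + b * W2 p + c * W3 p :=
    fun a b c => funext fun p => Dd_dir U p a b c
  -- second y-derivative of v
  have hyy2 : pdy (pdy v) x y t
      = Dd (C t * lam, 1, 0) (Dd (C t * lam, 1, 0) U)
          (x + C t * (lam * y - lam ^ 2 * g t / 2), y - lam * g t, t) := by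
    rw [hv_pdy_fun]
    exact ((deriv_along (Dd_contDiff hU _) (hvy x y t)).sub_const _).deriv
  -- derivative of v itself in x
  have hvds : HasDerivAt (fun s => v s y t)
      (W1 (x + C t * (lam * y - lam ^ 2 * g t / 2), y - lam * g t, t)) x := by
    simp only [hvdef]
    exact (deriv_along hU (hvx x y t)).sub_const _
  -- the outer x-derivative
  have hEx : pdx (fun x y t => pdt v x y t + v x y t * pdx v x y t - pdx (pdx v) x y t) x y t
      = Dd E1 (Dd (deriv C t * (lam * y - lam ^ 2 * g t / 2) + C t * (-(lam ^ 2 * deriv g t / 2)),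
              -(lam * deriv g t), 1) U)
            (x + C t * (lam * y - lam ^ 2 * g t / 2), y - lam * g t, t)
        + (W1 (x + C t * (lam * y - lam ^ 2 * g t / 2), y - lam * g t, t)
              * W1 (x + C t * (lam * y - lam ^ 2 * g t / 2), y - lam * g t, t)
            + v x y t * W11 (x + C t * (lam * y - lam ^ 2 * g t / 2), y - lam * g t, t))
        - Dd E1 W11 (x + C t * (lam * y - lam ^ 2 * g t / 2), y - lam * g t, t) := by
    rw [hv_pdt_fun, hv_pdxx_fun, hv_pdx_fun]
    exact ((((deriv_along (Dd_contDiff hU _) (hvx x y t)).sub_const _).add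
      (hvds.mul (deriv_along hW1 (hvx x y t)))).sub
        (deriv_along hW11 (hvx x y t))).deriv
  -- expansions in the coordinate directions
  have e2 : Dd E1 (Dd (deriv C t * (lam * y - lam ^ 2 * g t / 2)
          + C t * (-(lam ^ 2 * deriv g t / 2)), -(lam * deriv g t), 1) U)
        (x + C t * (lam * y - lam ^ 2 * g t / 2), y - lam * g t, t)
      = (deriv C t * (lam * y - lam ^ 2 * g t / 2) + C t * (-(lam ^ 2 * deriv g t / 2)))
          * Dd E1 W1 (x + C t * (lam * y - lam ^ 2 * g t / 2), y - lam * g t, t)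
        + (-(lam * deriv g t))
          * Dd E1 W2 (x + C t * (lam * y - lam ^ 2 * g t / 2), y - lam * g t, t)
        + 1 * Dd E1 W3 (x + C t * (lam * y - lam ^ 2 * g t / 2), y - lam * g t, t) := by
    rw [hexp]
    exact Dd_comb hW1d hW2d hW3d _ _ _ _ _
  have e1 : Dd (C t * lam, 1, 0) (Dd (C t * lam, 1, 0) U)
        (x + C t * (lam * y - lam ^ 2 * g t / 2), y - lam * g t, t)
      = C t * lam * Dd (C t * lam, 1, 0) W1
            (x + C t * (lam * y - lam ^ 2 * g t / 2), y - lam * g t, t)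
        + 1 * Dd (C t * lam, 1, 0) W2
            (x + C t * (lam * y - lam ^ 2 * g t / 2), y - lam * g t, t)
        + 0 * Dd (C t * lam, 1, 0) W3
            (x + C t * (lam * y - lam ^ 2 * g t / 2), y - lam * g t, t) := by
    rw [hexp]
    exact Dd_comb hW1d hW2d hW3d _ _ _ _ _
  have e1a : Dd (C t * lam, 1, 0) W1
        (x + C t * (lam * y - lam ^ 2 * g t / 2), y - lam * g t, t)
      = C t * lam * Dd E1 W1 (x + C t * (lam * y - lam ^ 2 * g t / 2), y - lam * g t, t)
        + 1 * Dd E2 W1 (x + C t * (lam * y - lam ^ 2 * g t / 2), y - lam * g t, t)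
        + 0 * Dd E3 W1 (x + C t * (lam * y - lam ^ 2 * g t / 2), y - lam * g t, t) :=
    Dd_dir W1 _ _ 1 0
  have e1b : Dd (C t * lam, 1, 0) W2
        (x + C t * (lam * y - lam ^ 2 * g t / 2), y - lam * g t, t)
      = C t * lam * Dd E1 W2 (x + C t * (lam * y - lam ^ 2 * g t / 2), y - lam * g t, t)
        + 1 * Dd E2 W2 (x + C t * (lam * y - lam ^ 2 * g t / 2), y - lam * g t, t)
        + 0 * Dd E3 W2 (x + C t * (lam * y - lam ^ 2 * g t / 2), y - lam * g t, t) :=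
    Dd_dir W2 _ _ 1 0
  have hsym : Dd E2 W1 (x + C t * (lam * y - lam ^ 2 * g t / 2), y - lam * g t, t)
      = Dd E1 W2 (x + C t * (lam * y - lam ^ 2 * g t / 2), y - lam * g t, t) :=
    Dd_symm hU E2 E1 _
  have hv0 : v x y t = U (x + C t * (lam * y - lam ^ 2 * g t / 2), y - lam * g t, t)
      - deriv C t * (lam * y - lam ^ 2 * g t / 2) := rfl
  have hCs : σ t * C t = deriv g t / 2 := by
    have : C t = deriv g t / (2 * σ t) := rfl
    have h2 : (2:ℝ) * σ t ≠ 0 := mul_ne_zero two_ne_zero (hσ0 t)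
    rw [this]
    field_simp [hσ0 t]
  have hkey := heqD (x + C t * (lam * y - lam ^ 2 * g t / 2)) (y - lam * g t) t
  rw [hEx, hyy2, e1, e1a, e1b, e2, hsym, hv0, ← hW11def]
  linear_combination hkey
    + (lam ^ 2 * C t * W11 (x + C t * (lam * y - lam ^ 2 * g t / 2), y - lam * g t, t)
        + 2 * lam * Dd E1 W2 (x + C t * (lam * y - lam ^ 2 * g t / 2), y - lam * g t, t)) * hCs
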